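/- If a connected graph G has a nonempty vertex subset S' with ω(G − S') ≥ |S'| + 2, then there exists a set-valued function H : V(G) → {{1},{0,2}} with |H⁻¹(1)| even such that G has no H-factor. -/

import Mathlib

open SimpleGraph

theorem stmt_14 {V : Type*} [Fintype V] (G : SimpleGraph V) (hconn : G.Connected)
    (S' : Set V) (hne : S'.Nonempty)
    (h : S'.ncard + 2 ≤ Nat.card (G.induce S'ᶜ).ConnectedComponent) :
    ∃ H : V → Set ℕ, (∀ v, H v = {1} ∨ H v = {0, 2}) ∧
      Even (Nat.card {v : V | H v = {1}}) ∧
      ¬ ∃ F : SimpleGraph V, F ≤ G ∧ ∀ v : V, Nat.card (F.neighborSet v) ∈ H v := by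
  classical
  set n := S'.ncard with hn
  set K := (G.induce S'ᶜ).ConnectedComponent with hK
  haveI : Finite K := Quot.finite _
  haveI : Fintype K := Fintype.ofFinite K
  obtain ⟨f⟩ : Nonempty (Fin (n+2) ↪ K) := by
    apply Function.Embedding.nonempty_of_card_le
    rwa [Fintype.card_fin, ← Nat.card_eq_fintype_card]
  have hrep : ∀ i : Fin (n+2), ∃ c : ↥S'ᶜ, (G.induce S'ᶜ).connectedComponentMk c = f i :=
    fun i => (f i).exists_rep
  choose c hc using hrep
  have hcinj : Function.Injective fun i => ((c i : V)) := by
    intro i j hij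
    apply f.injective
    rw [← hc i, ← hc j]
    congr 1
    exact Subtype.ext hij
  set T : Set V := S' ∪ Set.range (fun i => (c i : V)) with hT
  refine ⟨fun v => if v ∈ T then {1} else {0, 2}, fun v => ?_, ?_, ?_⟩
  · by_cases hv : v ∈ T <;> simp [hv]
  · have hTset : {v : V | (if v ∈ T then ({1} : Set ℕ) else {0, 2}) = {1}} = T := by
      ext v
      by_cases hv : v ∈ T
      · simp [hv]
      · simp only [Set.mem_setOf_eq, if_neg hv, hv, iff_false]
        intro hcon
        have : (0 : ℕ) ∈ ({1} : Set ℕ) := hcon ▸ (by simp : (0:ℕ) ∈ ({0,2} : Set ℕ))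
        simp at this
    rw [hTset, Nat.card_coe_set_eq, hT]
    have hdisj : Disjoint S' (Set.range fun i => ((c i : V))) := by
      rw [Set.disjoint_right]
      rintro x ⟨i, rfl⟩
      exact (c i).2
    rw [Set.ncard_union_eq hdisj (Set.toFinite _) (Set.toFinite _)]
    have : (Set.range fun i => ((c i : V))).ncard = n + 2 := by
      rw [← Set.image_univ, Set.ncard_image_of_injective _ hcinj]
      simp [Set.ncard_univ]
    rw [this, ← hn]
    exact ⟨n + 1, by ring⟩
  · rintro ⟨F, hFG, hdeg⟩
    -- convert Nat.card to degree
    have hcardeq : ∀ v, Nat.card (F.neighborSet v) = F.degree v := fun v => by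
      rw [Nat.card_eq_fintype_card, card_neighborSet_eq_degree]
    have hdegT : ∀ v ∈ T, F.degree v = 1 := by
      intro v hv
      have := hdeg v
      simp only [hcardeq, if_pos hv] at this
      simpa using this
    have hdegNT : ∀ v ∉ T, Even (F.degree v) := by
      intro v hv
      have := hdeg v
      simp only [hcardeq, if_neg hv] at this
      rcases this with h0 | h2
      · simp [h0]
      · simp only [Set.mem_singleton_iff] at h2
        rw [h2]; exact even_two
    -- key lemma: each chosen component sends an F-edge into S'
    have key : ∀ i : Fin (n+2), ∃ v w, w ∈ S' ∧ F.Adj v w ∧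
        ∃ hv : v ∈ S'ᶜ, (G.induce S'ᶜ).connectedComponentMk ⟨v,hv⟩ = f i := by
      intro i
      set Cset : Finset V := Finset.univ.filter
        (fun v => ∃ hv : v ∈ S'ᶜ, (G.induce S'ᶜ).connectedComponentMk ⟨v,hv⟩ = f i) with hCset
      have hnb : ∀ v ∈ Cset, ∀ w, F.Adj v w → w ∈ Cset ∨ w ∈ S' := by
        intro v hv w hadj
        by_cases hw : w ∈ S'
        · exact Or.inr hw
        · left
          simp only [hCset, Finset.mem_filter, Finset.mem_univ, true_and] at hv ⊢
          obtain ⟨hv', hcomp⟩ := hv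
          refine ⟨hw, ?_⟩
          rw [← hcomp]
          apply ConnectedComponent.sound
          apply Adj.reachable
          exact (hFG hadj).symm
      let F' : SimpleGraph V :=
        { Adj := fun a b => F.Adj a b ∧ a ∈ Cset ∧ b ∈ Cset,
          symm := ⟨fun a b ⟨hab, ha, hb⟩ => ⟨hab.symm, hb, ha⟩⟩,
          loopless := ⟨fun a h => F.loopless.irrefl a h.1⟩ }
      have heven : Even (∑ v, F'.degree v) := by
        rw [SimpleGraph.sum_degrees_eq_twice_card_edges]
        exact even_two_mul _
      have hnf : ∀ v ∈ Cset, F'.neighborFinset v = F.neighborFinset v ∩ Cset := by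
        intro v hv
        ext w
        simp only [mem_neighborFinset, Finset.mem_inter]
        constructor
        · rintro ⟨h1, _, h3⟩; exact ⟨h1, h3⟩
        · rintro ⟨h1, h3⟩; exact ⟨h1, hv, h3⟩
      have hdecomp : ∀ v ∈ Cset,
          F.degree v = F'.degree v + (F.neighborFinset v ∩ S'.toFinset).card := by
        intro v hv
        rw [SimpleGraph.degree, SimpleGraph.degree, hnf v hv]
        rw [← Finset.card_union_of_disjoint]
        · congr 1
          ext w
          simp only [Finset.mem_union, Finset.mem_inter, mem_neighborFinset, Set.mem_toFinset]
          constructor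
          · intro hadj
            rcases hnb v hv w hadj with h' | h'
            · exact Or.inl ⟨hadj, h'⟩
            · exact Or.inr ⟨hadj, h'⟩
          · rintro (⟨h1, _⟩ | ⟨h1, _⟩) <;> exact h1
        · rw [Finset.disjoint_left]
          intro w hw1 hw2
          rw [Finset.mem_inter] at hw1 hw2
          rw [Set.mem_toFinset] at hw2
          obtain ⟨_, hw1⟩ := hw1
          simp only [hCset, Finset.mem_filter] at hw1
          exact hw1.2.1 hw2.2
      have hF'out : ∀ v ∉ Cset, F'.degree v = 0 := by
        intro v hv
        rw [SimpleGraph.degree, Finset.card_eq_zero]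
        ext w
        simp only [mem_neighborFinset, Finset.notMem_empty, iff_false]
        rintro ⟨_, h2, _⟩
        exact hv h2
      have hsum : ∑ v ∈ Cset, F.degree v
          = (∑ v, F'.degree v) + ∑ v ∈ Cset, (F.neighborFinset v ∩ S'.toFinset).card := by
        rw [← Finset.sum_subset (Finset.subset_univ Cset) (fun v _ hv => hF'out v hv),
          ← Finset.sum_add_distrib]
        exact Finset.sum_congr rfl hdecomp
      -- c i is in Cset
      have hci : (c i : V) ∈ Cset := by
        simp only [hCset, Finset.mem_filter, Finset.mem_univ, true_and]
        exact ⟨(c i).2, by rw [← hc i]⟩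
      -- sum of degrees over Cset is odd
      have hodd : Odd (∑ v ∈ Cset, F.degree v) := by
        rw [← Finset.add_sum_erase _ _ hci]
        have h1 : F.degree (c i : V) = 1 := hdegT _ (Or.inr ⟨i, rfl⟩)
        have h2 : Even (∑ v ∈ Cset.erase (c i : V), F.degree v) := by
          rw [even_iff_two_dvd]
          apply Finset.dvd_sum
          intro v hv
          rw [← even_iff_two_dvd]
          apply hdegNT
          have hvC := Finset.mem_of_mem_erase hv
          have hvne := Finset.ne_of_mem_erase hv
          simp only [hCset, Finset.mem_filter, Finset.mem_univ, true_and] at hvC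
          obtain ⟨hv', hcomp⟩ := hvC
          rintro (hvS | ⟨j, hj⟩)
          · exact hv' hvS
          · apply hvne
            have : (⟨v, hv'⟩ : ↥S'ᶜ) = c j := Subtype.ext hj.symm
            rw [this, hc j] at hcomp
            have : j = i := f.injective hcomp
            rw [← hj, this]
        rw [h1]
        exact h2.one_add
      rw [hsum] at hodd
      have hcross : Odd (∑ v ∈ Cset, (F.neighborFinset v ∩ S'.toFinset).card) := by
        by_contra hB
        rw [Nat.not_odd_iff_even] at hB
        exact (Nat.not_odd_iff_even.2 (heven.add hB)) hodd
      have hpos : ∃ v ∈ Cset, (F.neighborFinset v ∩ S'.toFinset).Nonempty := by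
        by_contra hcon
        push_neg at hcon
        have : ∑ v ∈ Cset, (F.neighborFinset v ∩ S'.toFinset).card = 0 := by
          apply Finset.sum_eq_zero
          intro v hv
          rw [Finset.card_eq_zero, ← Finset.not_nonempty_iff_eq_empty]
          exact Finset.not_nonempty_iff_eq_empty.2 (hcon v hv)
        rw [this] at hcross
        exact (Nat.not_odd_iff_even.2 Even.zero) hcross
      obtain ⟨v, hvC, w, hw⟩ := hpos
      rw [Finset.mem_inter, mem_neighborFinset, Set.mem_toFinset] at hw
      simp only [hCset, Finset.mem_filter, Finset.mem_univ, true_and] at hvC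
      exact ⟨v, w, hw.2, hw.1, hvC⟩
    choose v w hwS hadj hcomp using key
    -- map sending i to its S'-endpoint, injectively
    have hWinj : Function.Injective w := by
      intro i j hij
      have hdw : F.degree (w i) = 1 := hdegT _ (Or.inl (hwS i))
      rw [SimpleGraph.degree, Finset.card_eq_one] at hdw
      obtain ⟨a, ha⟩ := hdw
      have hvi : v i ∈ F.neighborFinset (w i) := by
        rw [mem_neighborFinset]; exact (hadj i).symm
      have hvj : v j ∈ F.neighborFinset (w i) := by
        rw [mem_neighborFinset, hij]; exact (hadj j).symm
      rw [ha, Finset.mem_singleton] at hvi hvj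
      have hvij : v i = v j := hvi.trans hvj.symm
      obtain ⟨hi', hfi⟩ := hcomp i
      obtain ⟨hj', hfj⟩ := hcomp j
      apply f.injective
      rw [← hfi, ← hfj]
      congr 1
      exact Subtype.ext hvij
    have : n + 2 ≤ n := by
      have h1 : Nat.card (Fin (n+2)) ≤ Nat.card ↥S' :=
        Nat.card_le_card_of_injective (fun i => (⟨w i, hwS i⟩ : ↥S'))
          (fun i j hij => hWinj (congrArg Subtype.val hij))
      rwa [Nat.card_eq_fintype_card, Fintype.card_fin, Nat.card_coe_set_eq, ← hn] at h1
    omega
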